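/- Let ⊢⊣, → be relations on a set A such that ⊢⊣ is symmetric and → is well-founded. Then → is Church-Rosser modulo ⊢⊣* if and only if both (i') ← ∘ → ⊆ →* ∘ ⊢⊣* ∘ ←*, and (ii') ⊢⊣* ∘ → ⊆ →* ∘ ⊢⊣* ∘ ←*. -/

import Mathlib

open Relation

section Huet

variable {A : Type*} {hd ar : A → A → Prop}

private lemma hd_rev (hsym : ∀ a b, hd a b → hd b a) {a b : A}
    (h : ReflTransGen hd a b) : ReflTransGen hd b a := by
  induction h with
  | refl => exact .refl
  | tail _ hs ih => exact .head (hsym _ _ hs) ih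

private lemma nf_stop {n d : A} (hn : ∀ y, ¬ ar n y)
    (h : ReflTransGen ar n d) : d = n := by
  induction h with
  | refl => rfl
  | tail _ hs ih => exact absurd (ih ▸ hs) (hn _)

private lemma revTG {a b c : A} (h1 : ar a b) (h2 : ReflTransGen ar b c) :
    TransGen (fun x y => ar y x) c a := by
  induction h2 with
  | refl => exact .single h1
  | tail _ hs ih => exact .head hs ih

/-- every element has a normal form -/
private lemma exists_nf (wfr : WellFounded (fun x y : A => ar y x)) (a : A) :
    ∃ n, ReflTransGen ar a n ∧ ∀ y, ¬ ar n y := by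
  induction a using WellFounded.induction wfr with
  | _ a ih =>
    by_cases h : ∃ y, ar a y
    · obtain ⟨y, hy⟩ := h
      obtain ⟨n, hn1, hn2⟩ := ih y hy
      exact ⟨n, .head hy hn1, hn2⟩
    · exact ⟨a, .refl, fun y hy => h ⟨y, hy⟩⟩

/-- Lemma E : reduce an element hd-convertible to a normal form. -/
private lemma lemE (hsym : ∀ a b, hd a b → hd b a)
    (hii : ∀ a b c, Relation.ReflTransGen hd a b → ar b c →
      ∃ u v, Relation.ReflTransGen ar a u ∧ Relation.ReflTransGen hd u v ∧
        Relation.ReflTransGen ar c v)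
    (wfr : WellFounded (fun x y : A => ar y x)) :
    ∀ q n : A, (∀ y, ¬ ar n y) → ReflTransGen hd q n →
      ∃ w, (∀ y, ¬ ar w y) ∧ ReflTransGen ar q w ∧ ReflTransGen hd w n := by
  intro q
  induction q using WellFounded.induction wfr.transGen with
  | _ q ih =>
    intro n hn hqn
    by_cases hq : ∃ y, ar q y
    · obtain ⟨q1, hq1⟩ := hq
      obtain ⟨u, v, hnu, huv, hq1v⟩ := hii n q q1 (hd_rev hsym hqn) hq1
      have hu : u = n := nf_stop hn hnu
      have hvn : ReflTransGen hd v n := hd_rev hsym (hu ▸ huv)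
      obtain ⟨w, hw, hvw, hwn⟩ := ih v (revTG hq1 hq1v) n hn hvn
      exact ⟨w, hw, (ReflTransGen.head hq1 hq1v).trans hvw, hwn⟩
    · exact ⟨q, fun y hy => hq ⟨y, hy⟩, .refl, hqn⟩

/-- Main lemma: joint statement (K) normal-form confluence and (E') coherence. -/
private lemma lemMain (hsym : ∀ a b, hd a b → hd b a)
    (hi : ∀ a b c, ar b a → ar b c →
      ∃ u v, Relation.ReflTransGen ar a u ∧ Relation.ReflTransGen hd u v ∧
        Relation.ReflTransGen ar c v)
    (hii : ∀ a b c, Relation.ReflTransGen hd a b → ar b c →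
      ∃ u v, Relation.ReflTransGen ar a u ∧ Relation.ReflTransGen hd u v ∧
        Relation.ReflTransGen ar c v)
    (wfr : WellFounded (fun x y : A => ar y x)) :
    ∀ c : A,
      ((∀ n d, (∀ y, ¬ ar n y) → ReflTransGen ar c n → ReflTransGen ar c d →
        ∃ w, (∀ y, ¬ ar w y) ∧ ReflTransGen ar d w ∧ ReflTransGen hd n w) ∧
       (∀ q n, (∀ y, ¬ ar n y) → ReflTransGen hd q c → ReflTransGen ar c n →
        ∃ w, (∀ y, ¬ ar w y) ∧ ReflTransGen ar q w ∧ ReflTransGen hd w n)) := by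
  intro c
  induction c using WellFounded.induction wfr.transGen with
  | _ c ih =>
    constructor
    · -- (K)
      intro n d hn hcn hcd
      rcases hcn.cases_head with hc | ⟨a1, ha1, ha1n⟩
      · have hdn : d = n := nf_stop hn (hc ▸ hcd)
        exact ⟨n, hn, hdn ▸ ReflTransGen.refl, .refl⟩
      · rcases hcd.cases_head with hc | ⟨d1, hd1, hd1d⟩
        · exact ⟨n, hn, hc ▸ ReflTransGen.head ha1 ha1n, .refl⟩
        · obtain ⟨p, rr, hap, hpr, hdr⟩ := hi a1 c d1 ha1 hd1
          obtain ⟨w1, hw1, hpw1, hnw1⟩ :=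
            (ih a1 (.single ha1)).1 n p hn ha1n hap
          obtain ⟨w2, hw2, hrw2, hw2w1⟩ :=
            (ih p (revTG ha1 hap)).2 rr w1 hw1 (hd_rev hsym hpr) hpw1
          obtain ⟨w, hw, hdw, hw2w⟩ :=
            (ih d1 (.single hd1)).1 w2 d hw2 (hdr.trans hrw2) hd1d
          exact ⟨w, hw, hdw, (hnw1.trans (hd_rev hsym hw2w1)).trans hw2w⟩
    · -- (E')
      intro q n hn hqc hcn
      rcases hcn.cases_head with hc | ⟨c1, hc1, hc1n⟩
      · exact lemE hsym hii wfr q n hn (hc ▸ hqc)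
      · obtain ⟨s, t, hqs, hst, hct⟩ := hii q c c1 hqc hc1
        obtain ⟨w1, hw1, htw1, hnw1⟩ :=
          (ih c1 (.single hc1)).1 n t hn hc1n hct
        obtain ⟨w, hw, hsw, hww1⟩ :=
          (ih t (revTG hc1 hct)).2 s w1 hw1 hst htw1
        exact ⟨w, hw, hqs.trans hsw, hww1.trans (hd_rev hsym hnw1)⟩

end Huet

/-- Proposition 2.15 (corollary of Lemmas 2.6 and 2.7 of Huet 1980). -/
theorem crm_iff_huet_nonlocal {A : Type*} (hd ar : A → A → Prop)
    (hsym : ∀ a b, hd a b → hd b a)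
    (hwf : ¬ ∃ f : ℕ → A, ∀ n, ar (f n) (f (n + 1))) :
    (∀ a b, Relation.ReflTransGen (fun x y => ar x y ∨ ar y x ∨ hd x y) a b →
      ∃ u v, Relation.ReflTransGen ar a u ∧ Relation.ReflTransGen hd u v ∧
        Relation.ReflTransGen ar b v)
    ↔
    ((∀ a b c, ar b a → ar b c →
      ∃ u v, Relation.ReflTransGen ar a u ∧ Relation.ReflTransGen hd u v ∧
        Relation.ReflTransGen ar c v) ∧
     (∀ a b c, Relation.ReflTransGen hd a b → ar b c →
      ∃ u v, Relation.ReflTransGen ar a u ∧ Relation.ReflTransGen hd u v ∧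
        Relation.ReflTransGen ar c v)) := by
  constructor
  · intro h
    constructor
    · intro a b c hba hbc
      exact h a c (Relation.ReflTransGen.head (Or.inr (Or.inl hba))
        (Relation.ReflTransGen.single (Or.inl hbc)))
    · intro a b c hab hbc
      exact h a c (Relation.ReflTransGen.tail
        (Relation.ReflTransGen.mono (fun x y hxy => Or.inr (Or.inr hxy)) a b hab)
        (Or.inl hbc))
  · rintro ⟨hi, hii⟩ a b hconv
    have wfr : WellFounded (fun x y : A => ar y x) := by
      classical
      by_contra hnot
      have hx : ∃ a : A, ¬ Acc (fun x y : A => ar y x) a := by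
        by_contra h
        push_neg at h
        exact hnot ⟨h⟩
      have step : ∀ p : {x : A // ¬ Acc (fun x y : A => ar y x) x},
          ∃ q : {x : A // ¬ Acc (fun x y : A => ar y x) x}, ar p.1 q.1 := by
        rintro ⟨x, hxacc⟩
        obtain ⟨b, hb, hrb⟩ := exists_not_acc_lt_of_not_acc hxacc
        exact ⟨⟨b, hb⟩, hrb⟩
      choose g hg using step
      obtain ⟨a0, ha0⟩ := hx
      refine hwf ⟨fun n => (g^[n] ⟨a0, ha0⟩).1, fun n => ?_⟩
      simp only [Function.iterate_succ', Function.comp_apply]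
      exact hg _
    obtain ⟨n, han, hn⟩ := exists_nf wfr a
    have key : ∃ w, (∀ y, ¬ ar w y) ∧ Relation.ReflTransGen ar b w ∧
        Relation.ReflTransGen hd n w := by
      induction hconv with
      | refl => exact ⟨n, hn, han, .refl⟩
      | tail _ hs ih =>
        obtain ⟨w, hw, hbw, hnw⟩ := ih
        rcases hs with h1 | h2 | h3
        · obtain ⟨w', hw', hw'2, hw'3⟩ :=
            (lemMain hsym hi hii wfr _).1 w _ hw hbw (Relation.ReflTransGen.single h1)
          exact ⟨w', hw', hw'2, hnw.trans hw'3⟩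
        · exact ⟨w, hw, .head h2 hbw, hnw⟩
        · obtain ⟨w', hw', hw'2, hw'3⟩ :=
            (lemMain hsym hi hii wfr _).2 _ w hw (Relation.ReflTransGen.single (hsym _ _ h3)) hbw
          exact ⟨w', hw', hw'2, hnw.trans (hd_rev hsym hw'3)⟩
    obtain ⟨w, hw, hbw, hnw⟩ := key
    exact ⟨n, w, han, hnw, hbw⟩
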